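/- Define the semi-standard partial covariance γ_j = ρ_j s_j, where ρ_j is the partial correlation of Y and X_j given X_{-j} and s_j² = Var(Y|X_{-j}). Under the Gaussian linear model, γ_j = β_j / √(d_{jj}), so in particular β_j = 0 if and only if γ_j = 0. -/

import Mathlib

open Matrix

/-- The semi-standard partial covariance `γ_j = ρ_j s_j`, where
`ρ_j = −σ^{jy}/√(σ^{jj}σ^{yy})` is the partial correlation between `Y` and `X_j` given `X_{-j}`
and `s_j² = Var(Y|X_{-j}) = σ^{jj}/(σ^{jj}σ^{yy} − (σ^{jy})²)`, satisfies
`γ_j = β_j / √(d_{jj})` under the Gaussian linear model; in particular `β_j = 0 ↔ γ_j = 0`. -/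
theorem stmt2 (p : ℕ) (C : Matrix (Fin p) (Fin p) ℝ) (hC : C.PosDef)
    (β : Fin p → ℝ) (σε : ℝ) (hσ : 0 < σε)
    (Sig : Matrix (Unit ⊕ Fin p) (Unit ⊕ Fin p) ℝ)
    (hSig : Sig = Matrix.fromBlocks
      (Matrix.of fun _ _ => β ⬝ᵥ (C *ᵥ β) + σε ^ 2)
      (Matrix.of fun _ j => (C *ᵥ β) j)
      (Matrix.of fun j _ => (C *ᵥ β) j) C)
    (ρ s γ : Fin p → ℝ)
    (hρ : ∀ j, ρ j = -(Sig⁻¹ (Sum.inr j) (Sum.inl ())) /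
      Real.sqrt (Sig⁻¹ (Sum.inr j) (Sum.inr j) * Sig⁻¹ (Sum.inl ()) (Sum.inl ())))
    (hs : ∀ j, s j = Real.sqrt (Sig⁻¹ (Sum.inr j) (Sum.inr j) /
      (Sig⁻¹ (Sum.inr j) (Sum.inr j) * Sig⁻¹ (Sum.inl ()) (Sum.inl ()) -
        (Sig⁻¹ (Sum.inr j) (Sum.inl ())) ^ 2)))
    (hγ : ∀ j, γ j = ρ j * s j) :
    ∀ j : Fin p, γ j = β j / Real.sqrt (C⁻¹ j j) ∧ (β j = 0 ↔ γ j = 0) := by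
  set e : ℝ := σε ^ 2 with he
  have he0 : 0 < e := by positivity
  have hCt : Cᵀ = C := hC.isHermitian
  have hCdet : IsUnit C.det := isUnit_iff_ne_zero.mpr hC.det_pos.ne'
  have hCCi : C * C⁻¹ = 1 := Matrix.mul_nonsing_inv C hCdet
  -- the explicit inverse
  set M : Matrix (Unit ⊕ Fin p) (Unit ⊕ Fin p) ℝ := Matrix.fromBlocks
      (Matrix.of fun _ _ => e⁻¹)
      (Matrix.of fun _ j => -(β j) * e⁻¹)
      (Matrix.of fun j _ => -(β j) * e⁻¹)
      (C⁻¹ + e⁻¹ • (Matrix.of fun i j => β i * β j)) with hM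
  have hvec : ∀ j, ∑ k, (C *ᵥ β) k * C⁻¹ k j = β j := by
    intro j
    have : ((C *ᵥ β) ᵥ* C⁻¹) j = β j := by
      rw [← hCt, mulVec_transpose, vecMul_vecMul, hCt, hCCi, vecMul_one]
    simpa [vecMul, dotProduct] using this
  have key : Sig * M = 1 := by
    have hTL : (Matrix.of fun (_ _ : Unit) => β ⬝ᵥ (C *ᵥ β) + e) * (Matrix.of fun (_ _ : Unit) => e⁻¹)
        + (Matrix.of fun (_ : Unit) j => (C *ᵥ β) j) * (Matrix.of fun j (_ : Unit) => -(β j) * e⁻¹)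
        = 1 := by
      ext i j
      simp only [Matrix.add_apply, Matrix.mul_apply, Matrix.of_apply, Finset.univ_unique,
        Finset.sum_singleton, Matrix.one_apply_eq]
      have h1 : ∑ k, (C *ᵥ β) k * (-(β k) * e⁻¹) = -(β ⬝ᵥ (C *ᵥ β)) * e⁻¹ := by
        rw [dotProduct]
        calc ∑ k, (C *ᵥ β) k * (-(β k) * e⁻¹)
            = ∑ k, -(β k * (C *ᵥ β) k * e⁻¹) := Finset.sum_congr rfl fun k _ => by ring
          _ = -((∑ k, β k * (C *ᵥ β) k) * e⁻¹) := by
              simp [Finset.sum_neg_distrib, Finset.sum_mul, neg_mul]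
          _ = (-∑ k, β k * (C *ᵥ β) k) * e⁻¹ := by rw [neg_mul]
      rw [h1]
      field_simp
      ring
    have hTR : (Matrix.of fun (_ _ : Unit) => β ⬝ᵥ (C *ᵥ β) + e) * (Matrix.of fun (_ : Unit) j => -(β j) * e⁻¹)
        + (Matrix.of fun (_ : Unit) j => (C *ᵥ β) j) * (C⁻¹ + e⁻¹ • (Matrix.of fun i j => β i * β j))
        = 0 := by
      ext i j
      simp only [Matrix.add_apply, Matrix.mul_apply, Matrix.of_apply, Finset.univ_unique,
        Finset.sum_singleton, Matrix.zero_apply, Matrix.smul_apply, smul_eq_mul]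
      have h1 : ∑ k, (C *ᵥ β) k * (C⁻¹ k j + e⁻¹ * (β k * β j)) =
          β j + e⁻¹ * ((β ⬝ᵥ (C *ᵥ β)) * β j) := by
        calc ∑ k, (C *ᵥ β) k * (C⁻¹ k j + e⁻¹ * (β k * β j))
            = ∑ k, ((C *ᵥ β) k * C⁻¹ k j + (β k * (C *ᵥ β) k) * (e⁻¹ * β j)) :=
              Finset.sum_congr rfl fun k _ => by ring
          _ = (∑ k, (C *ᵥ β) k * C⁻¹ k j) + (∑ k, β k * (C *ᵥ β) k) * (e⁻¹ * β j) := by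
              rw [Finset.sum_add_distrib, Finset.sum_mul]
          _ = β j + e⁻¹ * ((β ⬝ᵥ (C *ᵥ β)) * β j) := by rw [hvec, dotProduct]; ring
      rw [h1]
      field_simp
      ring
    have hBL : (Matrix.of fun j (_ : Unit) => (C *ᵥ β) j) * (Matrix.of fun (_ _ : Unit) => e⁻¹)
        + C * (Matrix.of fun j (_ : Unit) => -(β j) * e⁻¹) = 0 := by
      ext i j
      simp only [Matrix.add_apply, Matrix.mul_apply, Matrix.of_apply, Finset.univ_unique,
        Finset.sum_singleton, Matrix.zero_apply]
      have h1 : ∑ k, C i k * (-(β k) * e⁻¹) = -(C *ᵥ β) i * e⁻¹ := by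
        rw [mulVec, dotProduct]
        calc ∑ k, C i k * (-(β k) * e⁻¹)
            = ∑ k, -(C i k * β k * e⁻¹) := Finset.sum_congr rfl fun k _ => by ring
          _ = -(∑ k, C i k * β k) * e⁻¹ := by
              simp [Finset.sum_neg_distrib, Finset.sum_mul, neg_mul]
      rw [h1]
      ring
    have hBR : (Matrix.of fun j (_ : Unit) => (C *ᵥ β) j) * (Matrix.of fun (_ : Unit) j => -(β j) * e⁻¹)
        + C * (C⁻¹ + e⁻¹ • (Matrix.of fun i j => β i * β j)) = 1 := by
      ext i j
      simp only [Matrix.add_apply, Matrix.mul_apply, Matrix.of_apply, Finset.univ_unique,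
        Finset.sum_singleton, Matrix.smul_apply, smul_eq_mul]
      have h1 : ∑ k, C i k * (C⁻¹ k j + e⁻¹ * (β k * β j)) =
          (C * C⁻¹) i j + e⁻¹ * ((C *ᵥ β) i * β j) := by
        calc ∑ k, C i k * (C⁻¹ k j + e⁻¹ * (β k * β j))
            = ∑ k, (C i k * C⁻¹ k j + (C i k * β k) * (e⁻¹ * β j)) :=
              Finset.sum_congr rfl fun k _ => by ring
          _ = (∑ k, C i k * C⁻¹ k j) + (∑ k, C i k * β k) * (e⁻¹ * β j) := by
              rw [Finset.sum_add_distrib, Finset.sum_mul]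
          _ = (C * C⁻¹) i j + e⁻¹ * ((C *ᵥ β) i * β j) := by
              rw [Matrix.mul_apply, mulVec, dotProduct]; ring
      rw [h1, hCCi]
      rw [Matrix.one_apply]
      by_cases hij : i = j <;> simp [hij] <;> ring
    rw [hSig, hM, Matrix.fromBlocks_multiply, hTL, hTR, hBL, hBR, Matrix.fromBlocks_one]
  have hSinv : Sig⁻¹ = M := Matrix.inv_eq_right_inv key
  intro j
  have hd : 0 < C⁻¹ j j := by
    have hne : (Pi.single j 1 : Fin p → ℝ) ≠ 0 := by
      intro h
      have := congrFun h j
      simp at this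
    have := hC.inv.diag_pos (i := j)
    simpa [dotProduct, mulVec, Pi.single_apply, Finset.mul_sum] using this
  set d : ℝ := C⁻¹ j j with hdd
  set t : ℝ := β j with ht
  have ha : Sig⁻¹ (Sum.inl ()) (Sum.inl ()) = e⁻¹ := by rw [hSinv]; rfl
  have hb : Sig⁻¹ (Sum.inr j) (Sum.inl ()) = -t * e⁻¹ := by rw [hSinv]; rfl
  have hdj : Sig⁻¹ (Sum.inr j) (Sum.inr j) = d + e⁻¹ * (t * t) := by
    rw [hSinv]; simp [hM, Matrix.fromBlocks]; rfl
  -- arithmetic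
  have hX : 0 < d + e⁻¹ * (t * t) := add_pos_of_pos_of_nonneg hd (mul_nonneg (inv_nonneg.mpr he0.le) (mul_self_nonneg t))
  set X : ℝ := d + e⁻¹ * (t * t) with hXd
  have hγj : γ j = t / Real.sqrt d := by
    rw [hγ, hρ, hs, ha, hb, hdj]
    have h2 : X * e⁻¹ - (-t * e⁻¹) ^ 2 = d * e⁻¹ := by rw [hXd]; field_simp; ring
    rw [h2]
    have hXe : X / (d * e⁻¹) = X * e / d := by field_simp
    rw [hXe]
    rw [Real.sqrt_mul hX.le e⁻¹, Real.sqrt_inv, Real.sqrt_div (by positivity : (0:ℝ) ≤ X * e), Real.sqrt_mul hX.le e]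
    have hsX : 0 < Real.sqrt X := Real.sqrt_pos.mpr hX
    have hse : 0 < Real.sqrt e := Real.sqrt_pos.mpr he0
    have hsd : 0 < Real.sqrt d := Real.sqrt_pos.mpr hd
    have hee : Real.sqrt e * Real.sqrt e = e := Real.mul_self_sqrt he0.le
    field_simp
    ring_nf
    rw [Real.sq_sqrt (by positivity : (0:ℝ) ≤ σε ^ 2)]
  refine ⟨hγj, ?_⟩
  rw [hγj]
  constructor
  · intro h; rw [h]; simp
  · intro h
    have := div_eq_zero_iff.mp h
    rcases this with h | h
    · exact h
    · exact absurd h (Real.sqrt_pos.mpr hd).ne'
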